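/- Let Λ be an Artin algebra and let C be a class of finitely generated left Λ-modules closed under isomorphisms and finite direct sums. Then C is closed under submodules and under factor modules (i.e., for every finitely generated module Y in C, all submodules and all quotient modules of Y are in C) if and only if there exists a two-sided ideal I of Λ such that C equals the class of all finitely generated left Λ-modules X with I·X = 0. -/

import Mathlib

open CategoryTheory

universe u

section AuxiliaryLemmas

/-- Transfer Noetherianness along a quotient ring action. -/
theorem aux_noeth_descend {R : Type*} [CommRing R] (J : Ideal R) {M : Type*} [AddCommGroup M]
    [Module R M] (hM : Module.IsTorsionBySet R M J) :
    (letI := hM.module; IsNoetherian (R ⧸ J) M) → IsNoetherian R M := by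
  letI := hM.module
  intro hnoe
  rw [isNoetherian_def]
  intro p
  let q : Submodule (R ⧸ J) M :=
    { carrier := p
      add_mem' := fun h1 h2 => p.add_mem h1 h2
      zero_mem' := p.zero_mem
      smul_mem' := by
        intro c x hx
        obtain ⟨r, rfl⟩ := Ideal.Quotient.mk_surjective c
        show (Ideal.Quotient.mk J r) • x ∈ p
        rw [hM.mk_smul]
        exact p.smul_mem r hx }
  obtain ⟨s, hs⟩ := (isNoetherian_def.mp hnoe) q
  refine ⟨s, le_antisymm (Submodule.span_le.mpr ?_) ?_⟩
  · intro x hx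
    have : x ∈ q := hs ▸ Submodule.subset_span hx
    exact this
  · intro x hx
    have hxq : x ∈ Submodule.span (R ⧸ J) (s : Set M) := by
      rw [hs]; exact hx
    refine Submodule.span_induction (fun y hy => Submodule.subset_span hy)
      (Submodule.zero_mem _) (fun y z _ _ hy hz => Submodule.add_mem _ hy hz) ?_ hxq
    intro c y _ hy
    obtain ⟨r, rfl⟩ := Ideal.Quotient.mk_surjective c
    show (Ideal.Quotient.mk J r) • y ∈ _
    rw [hM.mk_smul]
    exact Submodule.smul_mem _ r hy

/-- A commutative Artinian ring is Noetherian (Hopkins). -/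
theorem aux_comm_hopkins (R : Type*) [CommRing R] [IsArtinianRing R] : IsNoetherianRing R := by
  classical
  set J : Ideal R := nilradical R with hJdef
  have hJjac : (⊥ : Ideal R).jacobson = J := by
    rw [Ideal.jacobson, hJdef, nilradical_eq_sInf]
    congr 1
    ext I
    simp [IsArtinianRing.isPrime_iff_isMaximal]
  haveI hss : IsSemisimpleRing (R ⧸ J) := by
    haveI := (IsArtinianRing.setOfPred_isMaximal_finite R).to_subtype
    letI : ∀ I : MaximalSpectrum R, Field (R ⧸ I.asIdeal) := fun I =>
      @Ideal.Quotient.field _ _ I.asIdeal I.isMaximal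
    exact RingEquiv.isSemisimpleRing (IsArtinianRing.quotNilradicalEquivPi R).symm.toRingEquiv
  obtain ⟨n, hn⟩ := IsArtinianRing.isNilpotent_jacobson_bot (R := R)
  rw [hJjac] at hn
  have step : ∀ m : ℕ, IsNoetherian R ↥(J ^ (m + 1) : Ideal R) →
      IsNoetherian R ↥(J ^ m : Ideal R) := by
    intro m ih
    have hle : (J ^ (m + 1) : Ideal R) ≤ J ^ m := Ideal.pow_le_pow_right (Nat.le_succ m)
    set M := ↥(J ^ m : Ideal R) with hM
    set N : Submodule R M := Submodule.comap (J ^ m : Ideal R).subtype (J ^ (m + 1)) with hN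
    haveI : IsNoetherian R ↥N :=
      isNoetherian_of_linearEquiv (Submodule.comapSubtypeEquivOfLe hle).symm
    have htor : Module.IsTorsionBySet R (M ⧸ N) (J : Set R) := by
      rw [Module.isTorsionBySet_quotient_iff]
      intro x r hr
      show ((r • x : M) : R) ∈ (J ^ (m + 1) : Ideal R)
      have : ((r • x : M) : R) = x.1 * r := by
        rw [Submodule.coe_smul, smul_eq_mul, mul_comm]
      rw [this, pow_succ]
      exact Ideal.mul_mem_mul x.2 hr
    letI := htor.module
    haveI : IsScalarTower R (R ⧸ J) (M ⧸ N) := htor.isScalarTower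
    haveI hart : IsArtinian (R ⧸ J) (M ⧸ N) := isArtinian_of_tower R inferInstance
    haveI : IsNoetherian (R ⧸ J) (M ⧸ N) := (IsSemisimpleModule.finite_tfae.out 2 1).mp hart
    have : IsNoetherian R (M ⧸ N) := aux_noeth_descend J htor ‹_›
    exact (isNoetherian_iff_submodule_quotient N).mpr ⟨‹_›, ‹_›⟩
  have main : ∀ k, IsNoetherian R ↥(J ^ (n - k) : Ideal R) := by
    intro k
    induction k with
    | zero =>
      haveI hsub : Subsingleton ↥(J ^ (n - 0) : Ideal R) := by
        rw [Nat.sub_zero, hn]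
        exact ⟨fun a b => Subtype.ext (by
          have ha : (a : R) = 0 := by exact Ideal.mem_bot.mp a.2
          have hb : (b : R) = 0 := by exact Ideal.mem_bot.mp b.2
          rw [ha, hb])⟩
      exact isNoetherian_of_finite R _
    | succ k ih =>
      rcases Nat.lt_or_ge k n with h | h
      · have he : n - k = (n - (k + 1)) + 1 := by omega
        rw [he] at ih
        exact step _ ih
      · have he : n - (k + 1) = n - k := by omega
        rw [he]
        exact ih
  have h0 := main n
  rw [Nat.sub_self, pow_zero, Ideal.one_eq_top] at h0
  exact isNoetherian_of_linearEquiv (Submodule.topEquiv (R := R) (M := R))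

end AuxiliaryLemmas

/-- Let `Λ` be an Artin algebra and `C` a class of finitely generated left `Λ`-modules
closed under isomorphisms and finite direct sums.  Then `C` is closed under submodules and
factor modules if and only if there is a two-sided ideal `I` of `Λ` such that `C` is exactly
the class of finitely generated left `Λ`-modules annihilated by `I`. -/
theorem stmt_13 {R Λ : Type u} [CommRing R] [IsArtinianRing R] [Ring Λ] [Algebra R Λ]
    [Module.Finite R Λ] (C : Set (ModuleCat.{u} Λ))
    (hfg : ∀ X ∈ C, Module.Finite Λ ↥X)
    (hiso : ∀ X Y : ModuleCat.{u} Λ, X ∈ C → Nonempty (↥X ≃ₗ[Λ] ↥Y) → Y ∈ C)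
    (hsum : ∀ (k : ℕ) (f : Fin k → ModuleCat.{u} Λ), (∀ i, f i ∈ C) →
      ModuleCat.of Λ (∀ i, ↥(f i)) ∈ C) :
    ((∀ X ∈ C, ∀ p : Submodule Λ ↥X, ModuleCat.of Λ ↥p ∈ C) ∧
      (∀ X ∈ C, ∀ (Z : ModuleCat.{u} Λ) (g : ↥X →ₗ[Λ] ↥Z), Function.Surjective g → Z ∈ C)) ↔
      (∃ I : TwoSidedIdeal Λ, ∀ X : ModuleCat.{u} Λ,
        X ∈ C ↔ Module.Finite Λ ↥X ∧ ∀ a ∈ I, ∀ x : ↥X, a • x = 0) := by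
  classical
  haveI hart : IsArtinianRing Λ := IsArtinianRing.of_finite R Λ
  haveI hnoeR : IsNoetherianRing R := aux_comm_hopkins R
  haveI hnoe : IsNoetherianRing Λ := isNoetherian_of_tower R inferInstance
  constructor
  · rintro ⟨hsub, hquot⟩
    set S0 : Set Λ := {a : Λ | ∀ X ∈ C, ∀ x : ↥X, a • x = 0} with hS0
    have h0 : (0 : Λ) ∈ S0 := fun X hX x => zero_smul _ _
    have hadd : ∀ {x y : Λ}, x ∈ S0 → y ∈ S0 → x + y ∈ S0 := fun {x y} hx hy X hX v => by
      rw [add_smul, hx X hX v, hy X hX v, add_zero]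
    have hneg : ∀ {x : Λ}, x ∈ S0 → -x ∈ S0 := fun {x} hx X hX v => by
      rw [neg_smul, hx X hX v, neg_zero]
    have hml : ∀ {x y : Λ}, y ∈ S0 → x * y ∈ S0 := fun {x y} hy X hX v => by
      rw [mul_smul, hy X hX v, smul_zero]
    have hmr : ∀ {x y : Λ}, x ∈ S0 → x * y ∈ S0 := fun {x y} hx X hX v => by
      rw [mul_smul]; exact hx X hX _
    refine ⟨TwoSidedIdeal.mk' S0 h0 hadd hneg hml hmr, fun X => ?_⟩
    simp only [TwoSidedIdeal.mem_mk']
    constructor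
    · intro hX
      exact ⟨hfg X hX, fun a ha x => ha X hX x⟩
    · rintro ⟨hXfin, hann⟩
      haveI := hXfin
      -- minimal finite intersection of point annihilators
      let ann : (Σ Y : ModuleCat.{u} Λ, ↥Y) → Submodule Λ Λ := fun p =>
        LinearMap.ker (LinearMap.toSpanSingleton Λ ↥p.1 p.2)
      let 𝒮 : Set (Submodule Λ Λ) :=
        {J | ∃ s : Finset (Σ Y : ModuleCat.{u} Λ, ↥Y),
          (∀ p ∈ s, p.1 ∈ C) ∧ J = ⨅ p ∈ s, ann p}
      have h𝒮 : 𝒮.Nonempty := ⟨⊤, ∅, by simp, by simp⟩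
      obtain ⟨J, ⟨s, hsC, rfl⟩, hmin⟩ := IsArtinian.set_has_minimal 𝒮 h𝒮
      -- the minimal intersection is contained in S0
      have hJI : ∀ a ∈ (⨅ p ∈ s, ann p), a ∈ S0 := by
        intro a haJ Y hY y
        by_contra hne
        have hmem : ((⨅ p ∈ s, ann p) ⊓ ann ⟨Y, y⟩) ∈ 𝒮 := by
          refine ⟨insert ⟨Y, y⟩ s, ?_, ?_⟩
          · intro p hp
            rcases Finset.mem_insert.mp hp with h | h
            · rw [h]; exact hY
            · exact hsC p h
          · rw [Finset.iInf_insert, inf_comm]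
        have hlt : ((⨅ p ∈ s, ann p) ⊓ ann ⟨Y, y⟩) < ⨅ p ∈ s, ann p := by
          refine lt_of_le_of_ne inf_le_left fun he => hne ?_
          have : a ∈ (⨅ p ∈ s, ann p) ⊓ ann ⟨Y, y⟩ := by rw [he]; exact haJ
          have h2 : a ∈ ann ⟨Y, y⟩ := this.2
          simpa [ann, LinearMap.toSpanSingleton_apply] using h2
        exact hmin _ hmem hlt
      have hIJ : ∀ a ∈ S0, a ∈ ⨅ p ∈ s, ann p := by
        intro a ha
        simp only [Submodule.mem_iInf]
        intro p hp
        simpa [ann, LinearMap.toSpanSingleton_apply] using ha p.1 (hsC p hp) p.2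
      -- embed Λ ⧸ J into a finite product of modules in C
      let e := s.equivFin
      let F : Fin s.card → ModuleCat.{u} Λ := fun i => (e.symm i).1.1
      have hF : ∀ i, F i ∈ C := fun i => hsC _ (e.symm i).2
      let φ : Λ →ₗ[Λ] (∀ i, ↥(F i)) :=
        LinearMap.pi fun i => LinearMap.toSpanSingleton Λ ↥(F i) (e.symm i).1.2
      have hker_sub : ∀ a ∈ LinearMap.ker φ, a ∈ ⨅ p ∈ s, ann p := by
        intro a ha
        simp only [Submodule.mem_iInf]
        intro p hp
        obtain ⟨i, hi⟩ := e.symm.surjective ⟨p, hp⟩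
        have h1 : a ∈ ann ((e.symm i : {x // x ∈ s}) : Σ Y : ModuleCat.{u} Λ, ↥Y) := by
          have h2 := congrFun (LinearMap.mem_ker.mp ha) i
          simpa [φ, ann, LinearMap.toSpanSingleton_apply] using h2
        rwa [show ((e.symm i : {x // x ∈ s}) : Σ Y : ModuleCat.{u} Λ, ↥Y) = p from
          congrArg Subtype.val hi] at h1
      have hMC : ModuleCat.of Λ (∀ i, ↥(F i)) ∈ C := hsum s.card F hF
      have hPC : ModuleCat.of Λ ↥(LinearMap.range φ) ∈ C :=
        hsub _ hMC (LinearMap.range φ)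
      -- generators of X
      obtain ⟨n, y, hy⟩ := Module.Finite.exists_fin (R := Λ) (M := ↥X)
      have hker_le : ∀ i : Fin n, LinearMap.ker φ ≤
          LinearMap.ker (LinearMap.toSpanSingleton Λ ↥X (y i)) := by
        intro i a haf
        have ha0 : a ∈ S0 := hJI a (hker_sub a haf)
        simp only [LinearMap.mem_ker, LinearMap.toSpanSingleton_apply]
        exact hann a ha0 (y i)
      let eq := LinearMap.quotKerEquivRange φ
      let gbar : Fin n → (Λ ⧸ LinearMap.ker φ) →ₗ[Λ] ↥X := fun i =>
        Submodule.liftQ _ (LinearMap.toSpanSingleton Λ ↥X (y i)) (hker_le i)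
      let Φ : (Fin n → ↥(LinearMap.range φ)) →ₗ[Λ] ↥X :=
        ∑ i, (gbar i).comp (eq.symm.toLinearMap.comp (LinearMap.proj i))
      have hΦ : Function.Surjective Φ := by
        intro x
        have hx : x ∈ Submodule.span Λ (Set.range y) := hy ▸ Submodule.mem_top
        obtain ⟨c, hc⟩ := (Submodule.mem_span_range_iff_exists_fun Λ).mp hx
        refine ⟨fun i => eq (Submodule.Quotient.mk (c i)), ?_⟩
        simp only [Φ, LinearMap.sum_apply, LinearMap.comp_apply, LinearMap.proj_apply,
          LinearEquiv.coe_coe, LinearEquiv.coe_toLinearMap, LinearEquiv.symm_apply_apply, gbar,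
          Submodule.liftQ_apply, LinearMap.toSpanSingleton_apply]
        exact hc
      exact hquot _ (hsum n (fun _ => ModuleCat.of Λ ↥(LinearMap.range φ)) fun _ => hPC) X Φ hΦ
  · rintro ⟨I, hI⟩
    constructor
    · intro X hX p
      obtain ⟨hXfin, hann⟩ := (hI X).mp hX
      haveI := hXfin
      refine (hI _).mpr ⟨?_, ?_⟩
      · exact Module.Finite.iff_fg.mpr (IsNoetherian.noetherian p)
      · intro a ha x
        exact Subtype.ext (hann a ha x.1)
    · intro X hX Z g hg
      obtain ⟨hXfin, hann⟩ := (hI X).mp hX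
      haveI := hXfin
      refine (hI Z).mpr ⟨Module.Finite.of_surjective g hg, ?_⟩
      intro a ha z
      obtain ⟨x, rfl⟩ := hg z
      rw [← map_smul, hann a ha x, map_zero]
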